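/- Suppose ‖F(z)‖_* ≤ B for all z ∈ Z. Let z_{t−1} ∈ Z, η > 0, and let w_t ∈ Z be an ε-approximate fixed point, i.e. ‖w_t − Prox_{z_{t−1}}(η F(w_t))‖ ≤ ε. Set z_t := Prox_{z_{t−1}}(η F(w_t)). Then for all ẑ ∈ Z: η⟨F(w_t), ẑ − w_t⟩ ≥ D(ẑ‖z_t) − D(ẑ‖z_{t−1}) + D(z_t‖z_{t−1}) − ηBε. -/

import Mathlib

open scoped RealInnerProductSpace

/-- Per-step inequality of the conceptual prox method with an `ε`-approximate
fixed point: if `‖w_t − Prox_{z_{t−1}}(η F(w_t))‖ ≤ ε` and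
`z_t := Prox_{z_{t−1}}(η F(w_t))`, then for all `ẑ ∈ Z`,
`η⟪F(w_t), ẑ − w_t⟫ ≥ D(ẑ‖z_t) − D(ẑ‖z_{t−1}) + D(z_t‖z_{t−1}) − ηBε`. -/
theorem stmt_6 {d : ℕ} (Z : Set (EuclideanSpace ℝ (Fin d)))
    (hZne : Z.Nonempty) (hZconv : Convex ℝ Z) (hZcomp : IsCompact Z)
    (N : Seminorm ℝ (EuclideanSpace ℝ (Fin d)))
    (hNdef : ∀ v, N v = 0 → v = 0)
    (Nstar : EuclideanSpace ℝ (Fin d) → ℝ)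
    (hNstar : ∀ g, Nstar g = sSup ((fun v => ⟪g, v⟫) '' {v | N v ≤ 1}))
    (φ : EuclideanSpace ℝ (Fin d) → ℝ)
    (gradφ : EuclideanSpace ℝ (Fin d) → EuclideanSpace ℝ (Fin d))
    (hgrad : ∀ x ∈ Z, HasGradientAt φ (gradφ x) x)
    (hsc : ∀ x ∈ Z, ∀ y ∈ Z,
      φ x + ⟪gradφ x, y - x⟫ + (1/2) * (N (y - x))^2 ≤ φ y)
    (D : EuclideanSpace ℝ (Fin d) → EuclideanSpace ℝ (Fin d) → ℝ)
    (hD : ∀ x x', D x x' = φ x - φ x' - ⟪gradφ x', x - x'⟫)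
    (F : EuclideanSpace ℝ (Fin d) → EuclideanSpace ℝ (Fin d))
    (B : ℝ) (hB : ∀ w ∈ Z, Nstar (F w) ≤ B)
    (η : ℝ) (hη : 0 < η) (ε : ℝ) (hε : 0 ≤ ε)
    (zprev : EuclideanSpace ℝ (Fin d)) (hzprev : zprev ∈ Z)
    (wt : EuclideanSpace ℝ (Fin d)) (hwt : wt ∈ Z)
    (zt : EuclideanSpace ℝ (Fin d)) (hztZ : zt ∈ Z)
    -- `z_t = Prox_{z_{t−1}}(η F(w_t))`:
    (hzt : ∀ w ∈ Z, ⟪η • F wt, zt⟫ + D zt zprev ≤ ⟪η • F wt, w⟫ + D w zprev)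
    -- `w_t` is an `ε`-approximate fixed point:
    (happrox : N (wt - zt) ≤ ε) :
    ∀ zhat ∈ Z,
      D zhat zt - D zhat zprev + D zt zprev - η * B * ε
        ≤ η * ⟪F wt, zhat - wt⟫ := by
  -- continuity of N
  have hNcont : Continuous fun v : EuclideanSpace ℝ (Fin d) => N v := by
    have := N.convexOn.continuousOn isOpen_univ
    rw [← continuousOn_univ]; exact this
  -- bddAbove of dual sets
  have hbdd : ∀ g : EuclideanSpace ℝ (Fin d),
      BddAbove ((fun v => ⟪g, v⟫) '' {v | N v ≤ 1}) := by
    intro g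
    by_cases hall : ∀ v : EuclideanSpace ℝ (Fin d), v = 0
    · refine ⟨0, ?_⟩
      rintro x ⟨v, hv, rfl⟩
      simp [hall v]
    · push_neg at hall
      obtain ⟨u, hu⟩ := hall
      have hsne : (Metric.sphere (0 : EuclideanSpace ℝ (Fin d)) 1).Nonempty := by
        refine ⟨‖u‖⁻¹ • u, ?_⟩
        have h0 : ‖u‖ ≠ 0 := norm_ne_zero_iff.mpr hu
        simp [norm_smul, abs_of_nonneg (norm_nonneg u), inv_mul_cancel₀ h0]
      obtain ⟨v₀, hv₀S, hv₀min⟩ :=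
        (isCompact_sphere (0 : EuclideanSpace ℝ (Fin d)) 1).exists_isMinOn hsne
          hNcont.continuousOn
      have hv₀n : ‖v₀‖ = 1 := by simpa using mem_sphere_zero_iff_norm.mp hv₀S
      have hc : 0 < N v₀ := by
        rcases (apply_nonneg N v₀).lt_or_eq with h | h
        · exact h
        · exfalso
          have := hNdef v₀ h.symm
          rw [this, norm_zero] at hv₀n; norm_num at hv₀n
      have hlow : ∀ v : EuclideanSpace ℝ (Fin d), N v₀ * ‖v‖ ≤ N v := by
        intro v
        rcases eq_or_ne v 0 with rfl | hv
        · simp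
        · have h0 : ‖v‖ ≠ 0 := norm_ne_zero_iff.mpr hv
          have hmem : ‖v‖⁻¹ • v ∈ Metric.sphere (0 : EuclideanSpace ℝ (Fin d)) 1 := by
            simp [mem_sphere_zero_iff_norm, norm_smul,
              abs_of_nonneg (norm_nonneg v), inv_mul_cancel₀ h0]
          have h1 := hv₀min hmem
          have h2 : N v₀ ≤ ‖v‖⁻¹ * N v := by
            simpa [map_smul_eq_mul, abs_of_nonneg (norm_nonneg v)] using h1
          have h3 := mul_le_mul_of_nonneg_left h2 (norm_nonneg v)
          rw [← mul_assoc, mul_inv_cancel₀ h0, one_mul] at h3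
          linarith [h3]
      refine ⟨‖g‖ * (N v₀)⁻¹, ?_⟩
      rintro x ⟨v, hv, rfl⟩
      have h1 : ⟪g, v⟫ ≤ ‖g‖ * ‖v‖ := real_inner_le_norm g v
      have h2 : ‖v‖ ≤ (N v₀)⁻¹ := by
        rw [← one_div, le_div_iff₀ hc, mul_comm]
        exact (hlow v).trans hv
      calc ⟪g, v⟫ ≤ ‖g‖ * ‖v‖ := h1
        _ ≤ ‖g‖ * (N v₀)⁻¹ := mul_le_mul_of_nonneg_left h2 (norm_nonneg g)
  -- B ≥ 0
  have hB0 : 0 ≤ B := by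
    have h0 : (0:ℝ) ∈ (fun v => ⟪F wt, v⟫) '' {v | N v ≤ 1} :=
      ⟨0, by simp, by simp⟩
    have := le_csSup (hbdd (F wt)) h0
    rw [← hNstar (F wt)] at this
    exact this.trans (hB wt hwt)
  -- duality bound ⟪F wt, wt - zt⟫ ≤ B ε
  have hdual : ⟪F wt, wt - zt⟫ ≤ B * ε := by
    rcases (apply_nonneg N (wt - zt)).lt_or_eq with ht | ht
    · have hv1 : N ((N (wt - zt))⁻¹ • (wt - zt)) ≤ 1 := by
        rw [map_smul_eq_mul, Real.norm_eq_abs, abs_of_nonneg (inv_nonneg.2 ht.le),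
          inv_mul_cancel₀ ht.ne']
      have hle : ⟪F wt, (N (wt - zt))⁻¹ • (wt - zt)⟫ ≤ B := by
        have := le_csSup (hbdd (F wt)) ⟨(N (wt - zt))⁻¹ • (wt - zt), hv1, rfl⟩
        rw [← hNstar (F wt)] at this
        exact this.trans (hB wt hwt)
      rw [real_inner_smul_right] at hle
      have h3 := mul_le_mul_of_nonneg_left hle ht.le
      rw [← mul_assoc, mul_inv_cancel₀ ht.ne', one_mul] at h3
      calc ⟪F wt, wt - zt⟫ ≤ N (wt - zt) * B := h3
        _ ≤ ε * B := mul_le_mul_of_nonneg_right happrox hB0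
        _ = B * ε := mul_comm _ _
    · have hz : wt - zt = 0 := hNdef _ ht.symm
      rw [hz, inner_zero_right]
      positivity
  intro zhat hzhat
  set v : EuclideanSpace ℝ (Fin d) := zhat - zt with hvdef
  -- first-order optimality along the segment from zt to zhat
  have hfoc : 0 ≤ ⟪gradφ zt, v⟫ + (⟪η • F wt, v⟫ - ⟪gradφ zprev, v⟫) := by
    set c : ℝ → ℝ := fun s => ⟪η • F wt, zt + s • v⟫ + D (zt + s • v) zprev with hcdef
    have hderiv : HasDerivAt c
        (⟪gradφ zt, v⟫ + (⟪η • F wt, v⟫ - ⟪gradφ zprev, v⟫)) 0 := by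
      have line : HasDerivAt (fun s : ℝ => zt + s • v) v 0 := by
        simpa using ((hasDerivAt_id (0:ℝ)).smul_const v).const_add zt
      have h' : HasFDerivAt φ
          ((InnerProductSpace.toDual ℝ (EuclideanSpace ℝ (Fin d))) (gradφ zt))
          (zt + (0:ℝ) • v) := by
        simpa using (hgrad zt hztZ).hasFDerivAt
      have hφd : HasDerivAt (fun s : ℝ => φ (zt + s • v)) ⟪gradφ zt, v⟫ 0 := by
        exact h'.comp_hasDerivAt 0 line
      have hkey : ∀ s : ℝ, c s = φ (zt + s • v)
          + (⟪η • F wt, zt⟫ - φ zprev - ⟪gradφ zprev, zt - zprev⟫)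
          + s * (⟪η • F wt, v⟫ - ⟪gradφ zprev, v⟫) := by
        intro s
        have e1 : zt + s • v - zprev = (zt - zprev) + s • v := by abel
        simp only [hcdef, hD, e1, inner_add_right, real_inner_smul_right]
        ring
      have hlin : HasDerivAt (fun s : ℝ =>
          s * (⟪η • F wt, v⟫ - ⟪gradφ zprev, v⟫))
          (⟪η • F wt, v⟫ - ⟪gradφ zprev, v⟫) 0 := by
        simpa using (hasDerivAt_id (0:ℝ)).mul_const
          (⟪η • F wt, v⟫ - ⟪gradφ zprev, v⟫)
      have haff := (hφd.add_const
        (⟪η • F wt, zt⟫ - φ zprev - ⟪gradφ zprev, zt - zprev⟫)).add hlin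
      exact haff.congr_of_eventuallyEq (Filter.Eventually.of_forall fun s => hkey s)
    have hmin : ∀ s ∈ Set.Ioc (0:ℝ) 1, c 0 ≤ c s := by
      intro s hs
      have hseg : zt + s • v = (1 - s) • zt + s • zhat := by
        rw [hvdef, smul_sub, sub_smul, one_smul]; abel
      have hmem : zt + s • v ∈ Z := by
        rw [hseg]
        exact hZconv hztZ hzhat (by linarith [hs.2]) hs.1.le (by ring)
      have h00 : zt + (0:ℝ) • v = zt := by simp
      have := hzt (zt + s • v) hmem
      simp only [hcdef, h00]
      exact this
    have htend : Filter.Tendsto (slope c 0) (nhdsWithin 0 (Set.Ioi 0))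
        (nhds (⟪gradφ zt, v⟫ + (⟪η • F wt, v⟫ - ⟪gradφ zprev, v⟫))) := by
      have := hasDerivAt_iff_tendsto_slope.mp hderiv
      exact this.mono_left (nhdsWithin_mono 0 fun x hx => ne_of_gt hx)
    refine ge_of_tendsto htend ?_
    filter_upwards [Ioc_mem_nhdsGT_of_mem (Set.mem_Ico.mpr ⟨le_refl 0, zero_lt_one⟩)]
      with s hs
    rw [slope_def_field]
    exact div_nonneg (by linarith [hmin s hs]) (by linarith [hs.1])
  -- final algebra
  have hsm : ∀ x : EuclideanSpace ℝ (Fin d), ⟪η • F wt, x⟫ = η * ⟪F wt, x⟫ :=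
    fun x => real_inner_smul_left (F wt) x η
  rw [hsm] at hfoc
  rw [hD, hD, hD]
  have hsplit : η * ⟪F wt, v⟫ = η * ⟪F wt, zhat - wt⟫ + η * ⟪F wt, wt - zt⟫ := by
    have : ⟪F wt, v⟫ = ⟪F wt, zhat - wt⟫ + ⟪F wt, wt - zt⟫ := by
      rw [hvdef, ← inner_add_right]
      congr 1
      abel
    rw [this]; ring
  have hdual' : η * ⟪F wt, wt - zt⟫ ≤ η * B * ε := by
    have := mul_le_mul_of_nonneg_left hdual hη.le
    calc η * ⟪F wt, wt - zt⟫ ≤ η * (B * ε) := this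
      _ = η * B * ε := by ring
  have e1 : ⟪gradφ zprev, zhat - zprev⟫ - ⟪gradφ zprev, zt - zprev⟫
      = ⟪gradφ zprev, v⟫ := by
    rw [hvdef, ← inner_sub_right]
    congr 1
    abel
  have e2 : ⟪gradφ zt, zhat - zt⟫ = ⟪gradφ zt, v⟫ := by rw [hvdef]
  linarith [hfoc, hdual', hsplit, e1, e2]
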